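/- arXiv:1005.0488 — 2 statements merged into one kernel-verified Lean document; each statement's English description precedes it below -/
import Mathlib

section
/- Let φ = c_1 ∧ … ∧ c_m be a 3-CNF formula over variables x_1, …, x_n (each clause c_j a set of three literals), with n ≥ 1 and m ≥ 1, and let G_φ and S be as follows: V(G_φ) = {x̂_i} ∪ {x_i} ∪ {x̄_i} (1 ≤ i ≤ n) ∪ {c_j : 1 ≤ j ≤ m} ∪ {a}; edges: x̂_i x_i, x̂_i x̄_i; x_i c_j when literal x_i ∈ c_j and x̄_i c_j when literal x̄_i ∈ c_j; x_1 and x̄_1 each adjacent to all x_i and x̄_i for 2 ≤ i ≤ n; and a adjacent to every x_i, every x̄_i and every c_j; S = {x̂_i : 1 ≤ i ≤ n} ∪ {c_j : 1 ≤ j ≤ m}. If G_φ contains two internally disjoint trees connecting S, then there exists a truth assignment of x_1,…,x_n under which every clause of φ contains a true literal. Specifically, if T_1 is a tree of the pair not containing the vertex a, then for each i the tree T_1 contains exactly one of x_i and x̄_i, and the assignment setting x_i to 1 exactly when x_i ∈ V(T_1) satisfies φ. -/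
open SimpleGraph

/-- `F` is an internally disjoint family of trees connecting `S` in `G`:
each member is a subgraph of `G` that is a tree containing all of `S`, the members are
pairwise edge-disjoint, and any two distinct members intersect exactly in `S`. -/
def IsIDTrees {V : Type*} (G : SimpleGraph V) (S : Set V) {ι : Type*} (F : ι → G.Subgraph) : Prop :=
  (∀ i, S ⊆ (F i).verts ∧ ((F i).coe).IsTree) ∧
    ∀ i j, i ≠ j → (F i).verts ∩ (F j).verts = S ∧ Disjoint (F i).edgeSet (F j).edgeSet

/-- Vertices of the graph `G_φ` built from a 3-CNF formula with `n` variables and `m`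
clauses: `xhat i` is `x̂_i`, `lit true i` is the literal `x_i`, `lit false i` is the
literal `x̄_i`, `clause j` is `c_j`, and `a` is the extra vertex. -/
inductive SatVert (n m : ℕ) where
  | xhat (i : Fin n)
  | lit (b : Bool) (i : Fin n)
  | clause (j : Fin m)
  | a

/-- Base adjacency of `G_φ`, where a clause `c j` is the set of its (at most three)
literals, a literal being a pair `(b, i)` standing for `x_i` if `b = true` and for
`x̄_i` if `b = false`. The vertices `x_1, x̄_1` (index `0`) are joined to all `x_i, x̄_i`
with `i ≥ 2` (index `≠ 0`), and `a` is joined to all literal and clause vertices. -/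
def satRel {n m : ℕ} (c : Fin m → Finset (Bool × Fin n)) :
    SatVert n m → SatVert n m → Prop
  | .xhat i, .lit _ i' => i = i'
  | .lit b i, .clause j => (b, i) ∈ c j
  | .lit _ i, .lit _ i' => i.val = 0 ∧ i'.val ≠ 0
  | .a, .lit _ _ => True
  | .a, .clause _ => True
  | _, _ => False

/-- The graph `G_φ` of the 3-SAT reduction. -/
def satGraph {n m : ℕ} (c : Fin m → Finset (Bool × Fin n)) : SimpleGraph (SatVert n m) :=
  SimpleGraph.fromRel (satRel c)

/-- The set `S = {x̂_i : 1 ≤ i ≤ n} ∪ {c_j : 1 ≤ j ≤ m}`. -/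
def satS (n m : ℕ) : Set (SatVert n m) :=
  Set.range SatVert.xhat ∪ Set.range SatVert.clause


lemma Subgraph.exists_adj_of_connected {V : Type*} {G : SimpleGraph V} {H : G.Subgraph}
    (hc : H.coe.Connected) {v w : V} (hv : v ∈ H.verts) (hw : w ∈ H.verts) (hvw : v ≠ w) :
    ∃ u, u ∈ H.verts ∧ H.Adj v u := by
  obtain ⟨p⟩ := hc.preconnected ⟨v, hv⟩ ⟨w, hw⟩
  cases p with
  | nil => exact absurd rfl hvw
  | @cons _ x _ h p' =>
    exact ⟨x.1, x.2, (H.coe_adj _ _).mp h⟩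

lemma satGraph_adj_xhat {n m : ℕ} (c : Fin m → Finset (Bool × Fin n)) {i : Fin n}
    {u : SatVert n m} (h : (satGraph c).Adj (.xhat i) u) : ∃ b, u = .lit b i := by
  rw [satGraph, fromRel_adj] at h
  obtain ⟨-, h | h⟩ := h <;> cases u <;> simp_all [satRel]

lemma satGraph_adj_clause {n m : ℕ} (c : Fin m → Finset (Bool × Fin n)) {j : Fin m}
    {u : SatVert n m} (h : (satGraph c).Adj (.clause j) u) :
    u = .a ∨ ∃ b i, u = .lit b i ∧ (b, i) ∈ c j := by
  rw [satGraph, fromRel_adj] at h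
  obtain ⟨-, h | h⟩ := h
  · cases u <;> simp_all [satRel]
  · cases u with
    | lit b i => cases b <;> simp_all [satRel]
    | _ => simp_all [satRel]

lemma lit_not_mem_satS {n m : ℕ} (b : Bool) (i : Fin n) :
    SatVert.lit b i ∉ satS n m := by
  rintro (⟨x, hx⟩ | ⟨x, hx⟩) <;> simp_all

/-- If `G_φ` contains two internally disjoint trees connecting `S`, then `φ` is
satisfiable.  Specifically, for any tree `F i` of the pair not containing the vertex `a`,
`F i` contains exactly one of `x_v`, `x̄_v` for each variable `v`, and the assignment
setting `x_v` to `true` exactly when the vertex `x_v` belongs to `F i` satisfies `φ`. -/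
theorem sat_satisfiable_of_trees (n m : ℕ) (hn : 1 ≤ n) (hm : 1 ≤ m)
    (c : Fin m → Finset (Bool × Fin n)) (hc : ∀ j, (c j).card = 3)
    (F : Fin 2 → (satGraph c).Subgraph)
    (hF : IsIDTrees (satGraph c) (satS n m) F) :
    (∃ t : Fin n → Bool, ∀ j, ∃ l ∈ c j, t l.2 = l.1) ∧
      ∀ i : Fin 2, SatVert.a ∉ (F i).verts →
        (∀ v : Fin n, (SatVert.lit true v ∈ (F i).verts ↔ SatVert.lit false v ∉ (F i).verts)) ∧
        ∃ t : Fin n → Bool,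
          (∀ v : Fin n, t v = true ↔ SatVert.lit true v ∈ (F i).verts) ∧
          ∀ j, ∃ l ∈ c j, t l.2 = l.1 := by
  obtain ⟨hmem, hdisj⟩ := hF
  -- every tree contains, for each variable index, at least one literal vertex
  have key : ∀ k : Fin 2, ∀ i : Fin n, ∃ b, SatVert.lit b i ∈ (F k).verts := by
    intro k i
    have hx : SatVert.xhat i ∈ (F k).verts := (hmem k).1 (Or.inl ⟨i, rfl⟩)
    have hcl : SatVert.clause ⟨0, hm⟩ ∈ (F k).verts := (hmem k).1 (Or.inr ⟨_, rfl⟩)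
    have hne : (SatVert.xhat i : SatVert n m) ≠ SatVert.clause ⟨0, hm⟩ := by
      intro h; cases h
    obtain ⟨u, hu, hadj⟩ :=
      Subgraph.exists_adj_of_connected (hmem k).2.isConnected hx hcl hne
    obtain ⟨b, rfl⟩ := satGraph_adj_xhat c hadj.adj_sub
    exact ⟨b, hu⟩
  -- a tree cannot contain both literals of a variable
  have uniq : ∀ k : Fin 2, ∀ v : Fin n,
      ¬(SatVert.lit true v ∈ (F k).verts ∧ SatVert.lit false v ∈ (F k).verts) := by
    rintro k v ⟨h1, h2⟩
    obtain ⟨k', hkk'⟩ : ∃ k' : Fin 2, k ≠ k' := by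
      fin_cases k
      · exact ⟨1, by decide⟩
      · exact ⟨0, by decide⟩
    obtain ⟨b, hb⟩ := key k' v
    have : SatVert.lit b v ∈ (F k).verts ∩ (F k').verts := by
      cases b <;> exact ⟨by assumption, hb⟩
    rw [(hdisj k k' hkk').1] at this
    exact lit_not_mem_satS b v this
  -- main analysis for a tree avoiding `a`
  have main : ∀ k : Fin 2, SatVert.a ∉ (F k).verts →
      (∀ v : Fin n, (SatVert.lit true v ∈ (F k).verts ↔ SatVert.lit false v ∉ (F k).verts)) ∧
      ∃ t : Fin n → Bool,
        (∀ v : Fin n, t v = true ↔ SatVert.lit true v ∈ (F k).verts) ∧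
        ∀ j, ∃ l ∈ c j, t l.2 = l.1 := by
    intro k ha
    have hiff : ∀ v : Fin n,
        (SatVert.lit true v ∈ (F k).verts ↔ SatVert.lit false v ∉ (F k).verts) := by
      intro v
      constructor
      · intro h1 h2; exact uniq k v ⟨h1, h2⟩
      · intro h2
        obtain ⟨b, hb⟩ := key k v
        cases b
        · exact absurd hb h2
        · exact hb
    refine ⟨hiff, ?_⟩
    classical
    refine ⟨fun v => if SatVert.lit true v ∈ (F k).verts then true else false, ?_, ?_⟩
    · intro v; by_cases h : SatVert.lit true v ∈ (F k).verts <;> simp [h]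
    · intro j
      have hcj : SatVert.clause j ∈ (F k).verts := (hmem k).1 (Or.inr ⟨j, rfl⟩)
      have hx0 : SatVert.xhat ⟨0, hn⟩ ∈ (F k).verts := (hmem k).1 (Or.inl ⟨_, rfl⟩)
      have hne : (SatVert.clause j : SatVert n m) ≠ SatVert.xhat ⟨0, hn⟩ := by
        intro h; cases h
      obtain ⟨u, hu, hadj⟩ :=
        Subgraph.exists_adj_of_connected (hmem k).2.isConnected hcj hx0 hne
      rcases satGraph_adj_clause c hadj.adj_sub with rfl | ⟨b, i, rfl, hbi⟩
      · exact absurd hu ha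
      · refine ⟨(b, i), hbi, ?_⟩
        cases b
        · have : SatVert.lit true i ∉ (F k).verts := fun h => uniq k i ⟨h, hu⟩
          simp [this]
        · simp [hu]
  -- `a` is outside at least one of the two trees
  have haS : (SatVert.a : SatVert n m) ∉ satS n m := by
    rintro (⟨x, hx⟩ | ⟨x, hx⟩) <;> cases hx
  have hnot : SatVert.a ∉ (F 0).verts ∨ SatVert.a ∉ (F 1).verts := by
    by_contra h
    push_neg at h
    have : SatVert.a ∈ (F 0).verts ∩ (F 1).verts := ⟨h.1, h.2⟩
    rw [(hdisj 0 1 (by decide)).1] at this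
    exact haS this
  constructor
  · rcases hnot with h | h
    · obtain ⟨-, t, -, ht⟩ := main 0 h; exact ⟨t, ht⟩
    · obtain ⟨-, t, -, ht⟩ := main 1 h; exact ⟨t, ht⟩
  · exact main
end

section
/- Let k ≥ 3 be an integer, let G be a graph and let S be a subset of V(G) with |S| ≥ 2, and let G' be obtained from G by adding k − 2 new vertices, each joined to all vertices of S. If G' contains k internally disjoint trees connecting S, then at least two of these k trees contain no new vertex, and consequently G contains two internally disjoint trees connecting S. -/
open SimpleGraph

/-- Base adjacency of `G'`: the edges of `G` on the old vertices (`Sum.inl`), together with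
an edge from each of the `p` new vertices (`Sum.inr`) to every vertex of `S`. -/
def addRel {V : Type*} (G : SimpleGraph V) (S : Set V) {p : ℕ} :
    V ⊕ Fin p → V ⊕ Fin p → Prop
  | Sum.inl v, Sum.inl w => G.Adj v w
  | Sum.inr _, Sum.inl v => v ∈ S
  | _, _ => False

/-- The graph `G'` obtained from `G` by adding `p` new vertices, each joined to all
vertices of `S`. -/
def addGraph {V : Type*} (G : SimpleGraph V) (S : Set V) (p : ℕ) :
    SimpleGraph (V ⊕ Fin p) :=
  SimpleGraph.fromRel (addRel G S)

lemma isAcyclic_of_iso {A : Type*} {B : Type*} {GA : SimpleGraph A} {GB : SimpleGraph B}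
    (e : GA ≃g GB) (h : GB.IsAcyclic) : GA.IsAcyclic := by
  intro v p hp
  exact h (p.map e.toHom) (hp.map e.toEquiv.injective)

lemma isTree_of_iso {A : Type*} {B : Type*} {GA : SimpleGraph A} {GB : SimpleGraph B}
    (e : GA ≃g GB) (h : GB.IsTree) : GA.IsTree :=
  ⟨e.connected_iff.mpr h.isConnected, isAcyclic_of_iso e h.IsAcyclic⟩

lemma adj_of_addGraph {V : Type*} {G : SimpleGraph V} {S : Set V} {p : ℕ} {v w : V}
    (h : (addGraph G S p).Adj (Sum.inl v) (Sum.inl w)) : G.Adj v w := by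
  rcases h with ⟨-, h | h⟩
  · exact h
  · exact h.symm

/-- Pull back a subgraph of `addGraph G S p` avoiding all new vertices to a subgraph of `G`. -/
def pullback {V : Type*} (G : SimpleGraph V) (S : Set V) (p : ℕ)
    (H : (addGraph G S p).Subgraph) : G.Subgraph where
  verts := {v | Sum.inl v ∈ H.verts}
  Adj v w := H.Adj (Sum.inl v) (Sum.inl w)
  adj_sub h := adj_of_addGraph (H.adj_sub h)
  edge_vert h := H.edge_vert h
  symm := ⟨fun v w h => H.adj_symm h⟩

def pullbackIso {V : Type*} (G : SimpleGraph V) (S : Set V) (p : ℕ)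
    (H : (addGraph G S p).Subgraph) (h : ∀ a : Fin p, Sum.inr a ∉ H.verts) :
    (pullback G S p H).coe ≃g H.coe where
  toFun := fun x => ⟨Sum.inl x.1, x.2⟩
  invFun := fun x => match x with
    | ⟨Sum.inl v, hv⟩ => ⟨v, hv⟩
    | ⟨Sum.inr a, ha⟩ => absurd ha (h a)
  left_inv := fun x => rfl
  right_inv := fun x => by
    match x with
    | ⟨Sum.inl v, hv⟩ => rfl
    | ⟨Sum.inr a, ha⟩ => exact absurd ha (h a)
  map_rel_iff' := Iff.rfl

lemma pullback_props {V : Type*} (G : SimpleGraph V) (S : Set V) (p : ℕ)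
    {H H' : (addGraph G S p).Subgraph}
    (hint : H.verts ∩ H'.verts = Sum.inl '' S)
    (hdisj : Disjoint H.edgeSet H'.edgeSet) :
    (pullback G S p H).verts ∩ (pullback G S p H').verts = S ∧
      Disjoint (pullback G S p H).edgeSet (pullback G S p H').edgeSet := by
  constructor
  · ext v
    constructor
    · rintro ⟨h1, h2⟩
      have : Sum.inl v ∈ H.verts ∩ H'.verts := ⟨h1, h2⟩
      rw [hint] at this
      rcases this with ⟨w, hw, hwv⟩
      cases hwv
      exact hw
    · intro hv
      have : Sum.inl v ∈ H.verts ∩ H'.verts := by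
        rw [hint]; exact ⟨v, hv, rfl⟩
      exact this
  · rw [Set.disjoint_left]
    intro e he he'
    induction e with
    | h u v =>
      rw [Subgraph.mem_edgeSet] at he he'
      exact Set.disjoint_left.mp hdisj (Subgraph.mem_edgeSet.mpr he)
        (Subgraph.mem_edgeSet.mpr he')


/-- If `G'` (obtained from `G` by adding `k - 2` new vertices, each joined to all of `S`,
with `|S| ≥ 2` and `k ≥ 3`) contains `k` internally disjoint trees connecting `S`, then
at least two of these `k` trees contain no new vertex, and consequently `G` contains two
internally disjoint trees connecting `S`. -/
theorem add_trees_to_trees {V : Type*} (G : SimpleGraph V) (S : Set V)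
    (hS : S.Nontrivial) (k : ℕ) (hk : 3 ≤ k)
    (F : Fin k → (addGraph G S (k - 2)).Subgraph)
    (hF : IsIDTrees (addGraph G S (k - 2)) (Sum.inl '' S) F) :
    (∃ i j : Fin k, i ≠ j ∧
        (∀ a : Fin (k - 2), Sum.inr a ∉ (F i).verts) ∧
        (∀ a : Fin (k - 2), Sum.inr a ∉ (F j).verts)) ∧
      ∃ T : Fin 2 → G.Subgraph, IsIDTrees G S T := by
  classical
  have key : ∀ (a : Fin (k - 2)) (i j : Fin k), i ≠ j →
      Sum.inr a ∈ (F i).verts → Sum.inr a ∈ (F j).verts → False := by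
    intro a i j hij hi hj
    have h1 : (Sum.inr a : V ⊕ Fin (k - 2)) ∈ (F i).verts ∩ (F j).verts := ⟨hi, hj⟩
    rw [(hF.2 i j hij).1] at h1
    rcases h1 with ⟨w, -, hw⟩
    exact Sum.inl_ne_inr hw
  have hk2 : 0 < k - 2 := by omega
  set bad : Finset (Fin k) := Finset.univ.filter (fun i => ∃ a, Sum.inr a ∈ (F i).verts)
    with hbad
  set f : Fin k → Fin (k - 2) := fun i =>
    if h : ∃ a, Sum.inr a ∈ (F i).verts then h.choose else ⟨0, hk2⟩ with hf
  have hinj : Set.InjOn f bad := by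
    intro i hi j hj hfij
    by_contra hij
    rw [hbad, Finset.mem_coe, Finset.mem_filter] at hi hj
    rw [hf] at hfij
    simp only [dif_pos hi.2, dif_pos hj.2] at hfij
    exact key _ i j hij hi.2.choose_spec (hfij ▸ hj.2.choose_spec)
  have hcard : bad.card ≤ k - 2 := by
    have := Finset.card_le_card_of_injOn f (fun x _ => Finset.mem_univ (f x)) hinj
    simpa using this
  have hgood : 1 < badᶜ.card := by
    have := Finset.card_compl bad
    rw [this]
    simp only [Fintype.card_fin]
    omega
  obtain ⟨i, hi, j, hj, hij⟩ := Finset.one_lt_card.mp hgood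
  have hmem : ∀ x ∈ badᶜ, ∀ a : Fin (k - 2), Sum.inr a ∉ (F x).verts := by
    intro x hx a ha
    rw [Finset.mem_compl, hbad, Finset.mem_filter] at hx
    exact hx ⟨Finset.mem_univ x, a, ha⟩
  have hia := hmem i hi
  have hja := hmem j hj
  refine ⟨⟨i, j, hij, hia, hja⟩, ?_⟩
  set Ti := pullback G S (k - 2) (F i) with hTi
  set Tj := pullback G S (k - 2) (F j) with hTj
  have hprops := pullback_props G S (k - 2) (hF.2 i j hij).1 (hF.2 i j hij).2
  have hsub : ∀ x ∈ ({i, j} : Set (Fin k)), S ⊆ (pullback G S (k - 2) (F x)).verts ∧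
      ((pullback G S (k - 2) (F x)).coe).IsTree := by
    intro x _
    constructor
    · intro v hv
      exact (hF.1 x).1 ⟨v, hv, rfl⟩
    · exact isTree_of_iso (pullbackIso G S (k - 2) (F x)
        (hmem x (by rcases ‹x ∈ ({i, j} : Set (Fin k))› with h | h <;> subst h <;> assumption)))
        (hF.1 x).2
  refine ⟨![Ti, Tj], ⟨?_, ?_⟩⟩
  · intro n
    fin_cases n
    · exact hsub i (Or.inl rfl)
    · exact hsub j (Or.inr rfl)
  · intro n m hnm
    fin_cases n <;> fin_cases m <;>
      first
        | exact absurd rfl hnm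
        | exact hprops
        | exact ⟨Set.inter_comm _ _ ▸ hprops.1, hprops.2.symm⟩
end
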